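/- For any set P of n points in the plane in general position (no three collinear), with n even, there exists a family of n/2 halfplanes that separates P. -/

import Mathlib

/-- Points of the plane. -/
abbrev Pt := ℝ × ℝ

/-- A family `F` of planar sets separates a finite point set `P` if for every
pair of distinct points of `P` some member of `F` contains exactly one of them. -/
def SepPts (F : Finset (Set Pt)) (P : Finset Pt) : Prop :=
  ∀ x ∈ P, ∀ y ∈ P, x ≠ y → ∃ S ∈ F, (x ∈ S ↔ y ∉ S)

/-- A (closed) halfplane. -/
def IsHalfplane (S : Set Pt) : Prop :=
  ∃ u : Pt, ∃ c : ℝ, u ≠ 0 ∧ S = {p : Pt | p.1 * u.1 + p.2 * u.2 ≤ c}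

/-- A closed disc of positive radius. -/
def IsClosedDisc (S : Set Pt) : Prop :=
  ∃ q : Pt, ∃ r : ℝ, 0 < r ∧ S = Metric.closedBall q r

/-- A finite point set is in general position if no three of its points are
collinear. -/
def GenPos (P : Finset Pt) : Prop :=
  ∀ a ∈ P, ∀ b ∈ P, ∀ c ∈ P, a ≠ b → a ≠ c → b ≠ c → ¬ Collinear ℝ ({a, b, c} : Set Pt)

/-- A finite point set is in convex position if each of its points is an
extreme point of the convex hull, i.e. lies outside the hull of the others. -/
def ConvexPos (Q : Finset Pt) : Prop :=
  ∀ q ∈ Q, q ∉ convexHull ℝ (↑(Q.erase q) : Set Pt)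

/-- A finite point set lying on a circle. -/
def OnCircle (P : Finset Pt) : Prop :=
  ∃ q : Pt, ∃ r : ℝ, 0 < r ∧ ∀ x ∈ P, dist x q = r


/-- determinant criterion for collinearity -/
lemma collinear_of_det (p q r : Pt)
    (h : (r.2 - q.2) * (p.1 - q.1) - (p.2 - q.2) * (r.1 - q.1) = 0) :
    Collinear ℝ ({p, q, r} : Set Pt) := by
  by_cases hqr : q = r
  · subst hqr
    have : ({p, q, q} : Set Pt) = {p, q} := by simp
    rw [this]; exact collinear_pair ℝ p q
  rw [collinear_iff_of_mem (show q ∈ ({p, q, r} : Set Pt) by simp)]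
  refine ⟨r - q, ?_⟩
  intro x hx
  rcases hx with hx | hx | hx
  · subst hx
    rcases eq_or_ne q.1 r.1 with h1 | h1
    · have h2 : r.2 - q.2 ≠ 0 := fun h2 => hqr (Prod.ext h1 (by linarith))
      have hp1 : x.1 = q.1 := by
        have hz : (r.2 - q.2) * (x.1 - q.1) = 0 := by
          have : r.1 - q.1 = 0 := by rw [h1]; ring
          rw [this] at h; linarith
        rcases mul_eq_zero.mp hz with h' | h'
        · exact absurd h' h2
        · linarith
      refine ⟨(x.2 - q.2)/(r.2 - q.2), ?_⟩
      apply Prod.ext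
      · show x.1 = (x.2 - q.2)/(r.2 - q.2) * (r.1 - q.1) + q.1
        have : r.1 - q.1 = 0 := by rw [h1]; ring
        rw [this]; rw [hp1]; ring
      · show x.2 = (x.2 - q.2)/(r.2 - q.2) * (r.2 - q.2) + q.2
        field_simp; ring
    · have h1' : r.1 - q.1 ≠ 0 := sub_ne_zero.mpr (Ne.symm h1)
      refine ⟨(x.1 - q.1)/(r.1 - q.1), ?_⟩
      apply Prod.ext
      · show x.1 = (x.1 - q.1)/(r.1 - q.1) * (r.1 - q.1) + q.1
        field_simp; ring
      · show x.2 = (x.1 - q.1)/(r.1 - q.1) * (r.2 - q.2) + q.2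
        field_simp
        linear_combination -h
  · subst hx; exact ⟨0, by simp⟩
  · subst hx; exact ⟨1, by simp⟩

/-- a generic direction: `p ↦ p.1 + t p.2` is injective on `P`. -/
lemma exists_generic_t (P : Finset Pt) :
    ∃ t : ℝ, ∀ p ∈ P, ∀ q ∈ P, p ≠ q → p.1 + t * p.2 ≠ q.1 + t * q.2 := by
  obtain ⟨t, ht⟩ := Infinite.exists_notMem_finset
    ((P ×ˢ P).image (fun pq : Pt × Pt => -(pq.1.1 - pq.2.1) / (pq.1.2 - pq.2.2)))
  refine ⟨t, fun p hp q hq hne heq => ?_⟩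
  rcases eq_or_ne p.2 q.2 with h2 | h2
  · exact hne (Prod.ext (by rw [h2] at heq; linarith) h2)
  · apply ht
    refine Finset.mem_image.mpr ⟨(p, q), Finset.mem_product.mpr ⟨hp, hq⟩, ?_⟩
    have h2' : p.2 - q.2 ≠ 0 := sub_ne_zero.mpr h2
    field_simp
    linarith [heq]

/-- a balanced threshold. -/
lemma exists_median (Q : Finset ℝ) (k : ℕ) (hk : 1 ≤ k) (hcard : Q.card = 2 * k) :
    ∃ m : ℝ, (Q.filter (fun x => x < m)).card = k ∧
      (Q.filter (fun x => m < x)).card = k := by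
  have hk1 : k - 1 < Q.card := by omega
  have hk2 : k < Q.card := by omega
  set e := Q.orderIsoOfFin rfl with he
  set x1 : ℝ := ↑(e ⟨k - 1, by omega⟩) with hx1
  set x2 : ℝ := ↑(e ⟨k, by omega⟩) with hx2
  have hlt : x1 < x2 := by
    have := e.strictMono (show (⟨k - 1, by omega⟩ : Fin Q.card) < ⟨k, by omega⟩ by
      simp [Fin.lt_def]; omega)
    exact_mod_cast this
  set m := (x1 + x2) / 2 with hm
  have hm1 : x1 < m := by rw [hm]; linarith
  have hm2 : m < x2 := by rw [hm]; linarith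
  have key : ∀ y (hy : y ∈ Q), y < m ↔ ((e.symm ⟨y, hy⟩ : Fin Q.card) : ℕ) < k := by
    intro y hy
    set i := e.symm ⟨y, hy⟩ with hi
    constructor
    · intro hym
      by_contra hge
      push_neg at hge
      have h1 : (⟨k, hk2⟩ : Fin Q.card) ≤ i := by simpa [Fin.le_def] using hge
      have h2 : x2 ≤ y := by
        have := e.monotone h1
        rw [hi, OrderIso.apply_symm_apply] at this
        exact_mod_cast this
      linarith
    · intro hik
      have h1 : i ≤ (⟨k - 1, by omega⟩ : Fin Q.card) := by simp [Fin.le_def]; omega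
      have h2 : y ≤ x1 := by
        have := e.monotone h1
        rw [hi, OrderIso.apply_symm_apply] at this
        exact_mod_cast this
      linarith
  have himg : Q.filter (fun x => x < m) =
      (Finset.Iio (⟨k, hk2⟩ : Fin Q.card)).image (fun i => (e i : ℝ)) := by
    ext y
    simp only [Finset.mem_filter, Finset.mem_image, Finset.mem_Iio]
    constructor
    · rintro ⟨hyQ, hym⟩
      exact ⟨e.symm ⟨y, hyQ⟩, by
        rw [Fin.lt_def]
        exact (key y hyQ).mp hym, by simp⟩
    · rintro ⟨i, hik, rfl⟩
      refine ⟨(e i).2, ?_⟩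
      rw [key (e i : ℝ) (e i).2]
      have : e.symm ⟨(e i : ℝ), (e i).2⟩ = i := by
        simp [e.symm_apply_apply]
      rw [this]
      simpa [Fin.lt_def] using hik
  have hcard1 : (Q.filter (fun x => x < m)).card = k := by
    rw [himg, Finset.card_image_of_injective _ (fun a b hab => e.injective (Subtype.ext hab)),
      Fin.card_Iio]
  refine ⟨m, hcard1, ?_⟩
  have hsplit : (Q.filter (fun x => x < m)).card
      + (Q.filter (fun x => ¬ x < m)).card = Q.card :=
    Finset.card_filter_add_card_filter_not _
  have heq2 : Q.filter (fun x => ¬ x < m) = Q.filter (fun x => m < x) := by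
    ext y
    simp only [Finset.mem_filter, and_congr_right_iff]
    intro hy
    rcases lt_or_ge ((e.symm ⟨y, hy⟩ : Fin Q.card) : ℕ) k with hc | hc
    · have := (key y hy).mpr hc
      constructor
      · intro h'; exact absurd this h'
      · intro h'; intro _; linarith
    · have : ¬ y < m := by
        intro h'
        have := (key y hy).mp h'
        omega
      have hym : m < y := by
        have h1 : (⟨k, hk2⟩ : Fin Q.card) ≤ e.symm ⟨y, hy⟩ := by
          simpa [Fin.le_def] using hc
        have h2 : x2 ≤ y := by
          have := e.monotone h1
          rw [OrderIso.apply_symm_apply] at this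
          exact_mod_cast this
        linarith
      exact ⟨fun _ => hym, fun _ h' => this h'⟩
  rw [heq2, hcard1] at hsplit
  omega

/-- The key geometric step: a crossing hull edge can be cut off by a halfplane. -/
lemma step_lemma (t m : ℝ) (S : Finset Pt) (hgp : GenPos S)
    (hne : ∀ p ∈ S, p.1 + t * p.2 ≠ m)
    (hA : (S.filter (fun p => p.1 + t * p.2 < m)).Nonempty)
    (hB : (S.filter (fun p => m < p.1 + t * p.2)).Nonempty) :
    ∃ q ∈ S, ∃ r ∈ S, q.1 + t * q.2 < m ∧ m < r.1 + t * r.2 ∧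
      ∃ H : Set Pt, IsHalfplane H ∧ q ∈ H ∧ r ∈ H ∧
        ∀ p ∈ S, p ≠ q → p ≠ r → p ∉ H := by
  classical
  set A := S.filter (fun p => p.1 + t * p.2 < m) with hAdef
  set B := S.filter (fun p => m < p.1 + t * p.2) with hBdef
  have hABne : (A ×ˢ B).Nonempty := hA.product hB
  obtain ⟨z, hz, hmax⟩ := Finset.exists_max_image (A ×ˢ B)
    (fun z : Pt × Pt => (z.1.2 * ((z.2.1 + t * z.2.2) - m) + z.2.2 * (m - (z.1.1 + t * z.1.2)))
      / ((z.2.1 + t * z.2.2) - (z.1.1 + t * z.1.2))) hABne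
  obtain ⟨hzA, hzB⟩ := Finset.mem_product.mp hz
  set q := z.1 with hqdef
  set r := z.2 with hrdef
  obtain ⟨hqS, hqm⟩ := Finset.mem_filter.mp hzA
  obtain ⟨hrS, hrm⟩ := Finset.mem_filter.mp hzB
  have hqr : q ≠ r := fun h => by rw [h] at hqm; linarith
  -- every other point is strictly on the positive side of the line qr
  have hkey : ∀ p ∈ S, p ≠ q → p ≠ r →
      0 < (r.2 - q.2) * (p.1 - q.1) - (p.2 - q.2) * (r.1 - q.1) := by
    intro p hpS hpq hpr
    set D := (r.2 - q.2) * (p.1 - q.1) - (p.2 - q.2) * (r.1 - q.1) with hD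
    rcases lt_trichotomy D 0 with hD0 | hD0 | hD0
    · exfalso
      rcases (hne p hpS).lt_or_gt with hpm | hpm
      · -- p is on the left side: the pair (p, r) beats (q, r)
        have hpair : (p, r) ∈ A ×ˢ B :=
          Finset.mem_product.mpr ⟨Finset.mem_filter.mpr ⟨hpS, hpm⟩, hzB⟩
        have hle := hmax (p, r) hpair
        rw [div_le_div_iff₀ (show (0:ℝ) < r.1 + t * r.2 - (p.1 + t * p.2) by linarith)
          (show (0:ℝ) < r.1 + t * r.2 - (q.1 + t * q.2) by linarith)] at hle
        nlinarith [hle, mul_pos (neg_pos.mpr hD0) (show (0:ℝ) < (r.1 + t * r.2) - m by linarith)]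
      · -- p is on the right side: the pair (q, p) beats (q, r)
        have hpair : (q, p) ∈ A ×ˢ B :=
          Finset.mem_product.mpr ⟨hzA, Finset.mem_filter.mpr ⟨hpS, hpm⟩⟩
        have hle := hmax (q, p) hpair
        rw [div_le_div_iff₀ (show (0:ℝ) < p.1 + t * p.2 - (q.1 + t * q.2) by linarith)
          (show (0:ℝ) < r.1 + t * r.2 - (q.1 + t * q.2) by linarith)] at hle
        nlinarith [hle, mul_pos (neg_pos.mpr hD0) (show (0:ℝ) < m - (q.1 + t * q.2) by linarith)]
    · exfalso
      exact hgp p hpS q hqS r hrS hpq hpr hqr (collinear_of_det p q r hD0)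
    · exact hD0
  refine ⟨q, hqS, r, hrS, hqm, hrm, 
    {x : Pt | x.1 * (r.2 - q.2) + x.2 * (-(r.1 - q.1)) ≤ (r.2 - q.2) * q.1 - (r.1 - q.1) * q.2},
    ⟨(r.2 - q.2, -(r.1 - q.1)), (r.2 - q.2) * q.1 - (r.1 - q.1) * q.2, ?_, rfl⟩, ?_, ?_, ?_⟩
  · intro h
    obtain ⟨h1, h2⟩ := Prod.mk_eq_zero.mp h
    exact hqr (Prod.ext (by linarith [h2]) (by linarith [h1]))
  · show q.1 * (r.2 - q.2) + q.2 * (-(r.1 - q.1)) ≤ _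
    exact le_of_eq (by ring)
  · show r.1 * (r.2 - q.2) + r.2 * (-(r.1 - q.1)) ≤ _
    exact le_of_eq (by ring)
  · intro p hpS hpq hpr hmem
    have := hkey p hpS hpq hpr
    simp only [Set.mem_setOf_eq] at hmem
    nlinarith [this, hmem]

lemma induction_lemma (t m : ℝ) : ∀ j : ℕ, ∀ S : Finset Pt, GenPos S →
    (∀ p ∈ S, p.1 + t * p.2 ≠ m) →
    (S.filter (fun p => p.1 + t * p.2 < m)).card = j →
    (S.filter (fun p => m < p.1 + t * p.2)).card = j →
    ∃ F : Finset (Set Pt), F.card ≤ j - 1 ∧ (∀ H ∈ F, IsHalfplane H) ∧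
      ∀ x ∈ S, ∀ y ∈ S, x ≠ y → ((x.1 + t * x.2 < m) ↔ (y.1 + t * y.2 < m)) →
        ∃ H ∈ F, (x ∈ H ↔ y ∉ H) := by
  classical
  intro j
  induction j with
  | zero =>
    intro S hgp hne hA hB
    refine ⟨∅, by simp, by simp, fun x hx y hy hxy hiff => ?_⟩
    exfalso
    rcases (hne x hx).lt_or_gt with hxm | hxm
    · have : x ∈ S.filter (fun p => p.1 + t * p.2 < m) := Finset.mem_filter.mpr ⟨hx, hxm⟩
      rw [Finset.card_eq_zero.mp hA] at this
      exact absurd this (Finset.notMem_empty x)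
    · have : x ∈ S.filter (fun p => m < p.1 + t * p.2) := Finset.mem_filter.mpr ⟨hx, hxm⟩
      rw [Finset.card_eq_zero.mp hB] at this
      exact absurd this (Finset.notMem_empty x)
  | succ jj ih =>
    intro S hgp hne hA hB
    rcases Nat.eq_zero_or_pos jj with hjj | hjj
    · -- only one point on each side: nothing to separate on the same side
      subst hjj
      refine ⟨∅, by simp, by simp, fun x hx y hy hxy hiff => ?_⟩
      exfalso
      apply hxy
      rcases (hne x hx).lt_or_gt with hxm | hxm
      · have hym : y.1 + t * y.2 < m := hiff.mp hxm
        exact Finset.card_le_one.mp (le_of_eq hA) x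
          (Finset.mem_filter.mpr ⟨hx, hxm⟩) y (Finset.mem_filter.mpr ⟨hy, hym⟩)
      · have hym : m < y.1 + t * y.2 := by
          rcases (hne y hy).lt_or_gt with h' | h'
          · exact absurd (hiff.mpr h') (not_lt.mpr hxm.le)
          · exact h'
        exact Finset.card_le_one.mp (le_of_eq hB) x
          (Finset.mem_filter.mpr ⟨hx, hxm⟩) y (Finset.mem_filter.mpr ⟨hy, hym⟩)
    · -- at least two points on each side: cut off a crossing hull edge
      have hAne : (S.filter (fun p => p.1 + t * p.2 < m)).Nonempty :=
        Finset.card_pos.mp (by omega)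
      have hBne : (S.filter (fun p => m < p.1 + t * p.2)).Nonempty :=
        Finset.card_pos.mp (by omega)
      obtain ⟨q, hqS, r, hrS, hqm, hrm, H, hHhp, hqH, hrH, hout⟩ :=
        step_lemma t m S hgp hne hAne hBne
      set S' := (S.erase q).erase r with hS'def
      have hS'sub : S' ⊆ S := (Finset.erase_subset _ _).trans (Finset.erase_subset _ _)
      have hgp' : GenPos S' := fun a ha b hb c hc => hgp a (hS'sub ha) b (hS'sub hb) c (hS'sub hc)
      have hne' : ∀ p ∈ S', p.1 + t * p.2 ≠ m := fun p hp => hne p (hS'sub hp)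
      have hA' : (S'.filter (fun p => p.1 + t * p.2 < m)).card = jj := by
        rw [hS'def, Finset.filter_erase, Finset.filter_erase]
        have hr_not : r ∉ (S.filter (fun p => p.1 + t * p.2 < m)).erase q := fun h => by
          have := (Finset.mem_filter.mp (Finset.mem_of_mem_erase h)).2
          exact absurd this (not_lt.mpr hrm.le)
        rw [Finset.erase_eq_of_notMem hr_not]
        rw [Finset.card_erase_of_mem (Finset.mem_filter.mpr ⟨hqS, hqm⟩), hA]
        omega
      have hB' : (S'.filter (fun p => m < p.1 + t * p.2)).card = jj := by
        rw [hS'def, Finset.filter_erase, Finset.filter_erase]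
        have hq_not : q ∉ S.filter (fun p => m < p.1 + t * p.2) := fun h => by
          have := (Finset.mem_filter.mp h).2
          exact absurd this (not_lt.mpr hqm.le)
        rw [Finset.erase_eq_of_notMem hq_not]
        rw [Finset.card_erase_of_mem (Finset.mem_filter.mpr ⟨hrS, hrm⟩), hB]
        omega
      obtain ⟨F', hF'card, hF'hp, hF'sep⟩ := ih S' hgp' hne' hA' hB'
      refine ⟨insert H F', ?_, ?_, ?_⟩
      · calc (insert H F').card ≤ F'.card + 1 := Finset.card_insert_le _ _
          _ ≤ (jj - 1) + 1 := by omega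
          _ ≤ (jj + 1) - 1 := by omega
      · intro H' hH'
        rcases Finset.mem_insert.mp hH' with rfl | hH'
        · exact hHhp
        · exact hF'hp H' hH'
      · intro x hx y hy hxy hiff
        by_cases hxq : x = q
        · have hyr : y ≠ r := fun h => by
            rw [hxq, h] at hiff; exact absurd (hiff.mp hqm) (not_lt.mpr hrm.le)
          have hyq : y ≠ q := fun h => hxy (hxq.trans h.symm)
          exact ⟨H, Finset.mem_insert_self _ _,
            iff_of_true (by rw [hxq]; exact hqH) (hout y hy hyq hyr)⟩
        · by_cases hxr : x = r
          · have hyq : y ≠ q := fun h => by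
              rw [hxr, h] at hiff; exact absurd (hiff.mpr hqm) (not_lt.mpr hrm.le)
            have hyr : y ≠ r := fun h => hxy (hxr.trans h.symm)
            exact ⟨H, Finset.mem_insert_self _ _,
              iff_of_true (by rw [hxr]; exact hrH) (hout y hy hyq hyr)⟩
          · by_cases hyq : y = q
            · have hxr' : x ≠ r := fun h => by
                rw [hyq] at hiff; rw [h] at hiff
                exact absurd (hiff.mpr hqm) (not_lt.mpr hrm.le)
              refine ⟨H, Finset.mem_insert_self _ _,
                iff_of_false (hout x hx hxq hxr') (not_not_intro (by rw [hyq]; exact hqH))⟩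
            · by_cases hyr : y = r
              · exact ⟨H, Finset.mem_insert_self _ _,
                  iff_of_false (hout x hx hxq hxr) (not_not_intro (by rw [hyr]; exact hrH))⟩
              · have hx' : x ∈ S' := Finset.mem_erase.mpr ⟨hxr, Finset.mem_erase.mpr ⟨hxq, hx⟩⟩
                have hy' : y ∈ S' := Finset.mem_erase.mpr ⟨hyr, Finset.mem_erase.mpr ⟨hyq, hy⟩⟩
                obtain ⟨H', hH'F, hH'⟩ := hF'sep x hx' y hy' hxy hiff
                exact ⟨H', Finset.mem_insert_of_mem hH'F, hH'⟩

theorem halfplanes_general_position_upper_bound (n : ℕ) (hn : Even n)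
    (P : Finset Pt) (hP : P.card = n) (hgp : GenPos P) :
    ∃ H : Finset (Set Pt), H.card ≤ n / 2 ∧ (∀ S ∈ H, IsHalfplane S) ∧ SepPts H P := by
  classical
  obtain ⟨k, hk⟩ := hn
  rcases Nat.eq_zero_or_pos k with hk0 | hk0
  · -- no points at all
    subst hk0
    simp only [Nat.add_zero] at hk
    subst hk
    have : P = ∅ := Finset.card_eq_zero.mp hP
    subst this
    exact ⟨∅, by simp, by simp, fun x hx => absurd hx (Finset.notMem_empty x)⟩
  · obtain ⟨t, ht⟩ := exists_generic_t P
    set f : Pt → ℝ := fun p => p.1 + t * p.2 with hf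
    have hinj : Set.InjOn f P := fun p hp q hq h => by
      by_contra hne; exact ht p hp q hq hne h
    set Q := P.image f with hQ
    have hQcard : Q.card = 2 * k := by
      rw [hQ, Finset.card_image_of_injOn hinj, hP, hk]; ring
    obtain ⟨m, hmA, hmB⟩ := exists_median Q k hk0 hQcard
    have hPA : (P.filter (fun p => p.1 + t * p.2 < m)).card = k := by
      rw [← hmA, hQ, Finset.filter_image,
        Finset.card_image_of_injOn (hinj.mono (Finset.filter_subset _ _))]
    have hPB : (P.filter (fun p => m < p.1 + t * p.2)).card = k := by
      rw [← hmB, hQ, Finset.filter_image,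
        Finset.card_image_of_injOn (hinj.mono (Finset.filter_subset _ _))]
    -- no point of P has value exactly m
    have hnem : ∀ p ∈ P, p.1 + t * p.2 ≠ m := by
      have htot := Finset.card_filter_add_card_filter_not
        (s := Q) (p := fun x => x < m)
      have hsub : Q.filter (fun x => m < x) ⊆ Q.filter (fun x => ¬ x < m) :=
        Finset.monotone_filter_right Q (fun x _ hx => not_lt.mpr hx.le)
      have hseteq : Q.filter (fun x => m < x) = Q.filter (fun x => ¬ x < m) :=
        Finset.eq_of_subset_of_card_le hsub (by omega)
      intro p hp heq
      have hpQ : f p ∈ Q := Finset.mem_image_of_mem f hp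
      have hpmem : f p ∈ Q.filter (fun x => ¬ x < m) :=
        Finset.mem_filter.mpr ⟨hpQ, by rw [show f p = m from heq]; exact lt_irrefl m⟩
      rw [← hseteq] at hpmem
      have := (Finset.mem_filter.mp hpmem).2
      rw [show f p = m from heq] at this
      exact lt_irrefl m this
    obtain ⟨F, hFcard, hFhp, hFsep⟩ := induction_lemma t m k P hgp hnem hPA hPB
    set Hl : Set Pt := {p : Pt | p.1 * 1 + p.2 * t ≤ m} with hHl
    refine ⟨insert Hl F, ?_, ?_, ?_⟩
    · calc (insert Hl F).card ≤ F.card + 1 := Finset.card_insert_le _ _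
        _ ≤ (k - 1) + 1 := by omega
        _ ≤ n / 2 := by omega
    · intro S hS
      rcases Finset.mem_insert.mp hS with rfl | hS
      · exact ⟨(1, t), m, fun h => by
          simpa using congrArg Prod.fst h, rfl⟩
      · exact hFhp S hS
    · intro x hx y hy hxy
      by_cases hsame : (x.1 + t * x.2 < m ↔ y.1 + t * y.2 < m)
      · obtain ⟨H', hH'F, hH'⟩ := hFsep x hx y hy hxy hsame
        exact ⟨H', Finset.mem_insert_of_mem hH'F, hH'⟩
      · refine ⟨Hl, Finset.mem_insert_self _ _, ?_⟩
        have hxm := (hnem x hx).lt_or_gt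
        have hym := (hnem y hy).lt_or_gt
        rcases hxm with hxm | hxm
        · rcases hym with hym | hym
          · exact absurd (iff_of_true hxm hym) hsame
          · refine iff_of_true ?_ ?_
            · show x.1 * 1 + x.2 * t ≤ m; linarith
            · show ¬ (y.1 * 1 + y.2 * t ≤ m); intro h; linarith
        · rcases hym with hym | hym
          · refine iff_of_false ?_ ?_
            · show ¬ (x.1 * 1 + x.2 * t ≤ m); intro h; linarith
            · intro h; exact h (show y.1 * 1 + y.2 * t ≤ m by linarith)
          · exact absurd (iff_of_false (not_lt.mpr hxm.le) (not_lt.mpr hym.le)) hsame
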